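/- Let u : ℝ_{>0} → ℝ be locally Lipschitz with limsup_{x→∞} u(x)/x < c₀ (c₀ > 0), c₁ > 0, and Mu(x) := sup_{i>0}{u(x+i) - c₀ i - c₁}. Then for every 0 < m < M there exists R > 0 such that Mu(x) = sup_{0 < i ≤ R} {u(x+i) - c₀ i - c₁} for all x ∈ [m, M], and consequently Mu is Lipschitz continuous on [m, M]. -/
import Mathlib

open Set Metric

lemma contAt_aux (u : ℝ → ℝ)
    (hloclip : ∀ x > (0:ℝ), ∃ K : NNReal, ∃ ε > (0:ℝ),
      LipschitzOnWith K u (Metric.ball x ε ∩ Set.Ioi 0)) :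
    ∀ x : ℝ, 0 < x → ContinuousAt u x := by
  intro x hx
  obtain ⟨K, ε, hε, hlip⟩ := hloclip x hx
  have hmem : Metric.ball x ε ∩ Set.Ioi 0 ∈ nhds x :=
    Filter.inter_mem (Metric.ball_mem_nhds x hε) (Ioi_mem_nhds hx)
  exact hlip.continuousOn.continuousAt hmem

lemma lip_on_compact_aux (u : ℝ → ℝ)
    (hloclip : ∀ x > (0:ℝ), ∃ K : NNReal, ∃ ε > (0:ℝ),
      LipschitzOnWith K u (Metric.ball x ε ∩ Set.Ioi 0))
    (a b : ℝ) (ha : 0 < a) :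
    ∃ K : NNReal, ∀ x ∈ Set.Icc a b, ∀ y ∈ Set.Icc a b,
      dist (u x) (u y) ≤ (K : ℝ) * dist x y := by
  classical
  rcases le_or_gt b a with hba | hab
  · -- Icc a b is a subsingleton (at most one point)
    refine ⟨1, fun x hx y hy => ?_⟩
    have hx' : x = a := le_antisymm (hx.2.trans hba) hx.1
    have hy' : y = a := le_antisymm (hy.2.trans hba) hy.1
    subst hx'; subst hy'
    simp
  · have hsub : Set.Icc a b ⊆ Set.Ioi 0 := fun z hz => lt_of_lt_of_le ha hz.1
    have hs : IsCompact (Set.Icc a b) := isCompact_Icc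
    have hcont : ContinuousOn u (Set.Icc a b) := fun z hz =>
      (contAt_aux u hloclip z (hsub hz)).continuousWithinAt
    obtain ⟨C, hC⟩ := hs.exists_bound_of_continuousOn hcont
    have hC0 : 0 ≤ C := le_trans (norm_nonneg _) (hC a ⟨le_refl a, hab.le⟩)
    have key : ∀ x : Set.Icc a b, ∃ p : NNReal × ℝ, 0 < p.2 ∧
        LipschitzOnWith p.1 u (Metric.ball (x : ℝ) p.2 ∩ Set.Ioi 0) := by
      intro x
      obtain ⟨K, ε, hε, h⟩ := hloclip x (hsub x.2)
      exact ⟨(K, ε), hε, h⟩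
    choose p hp hlip using key
    set c : Set.Icc a b → Set ℝ := fun x => Metric.ball (x : ℝ) (p x).2 ∩ Set.Ioi 0 with hc
    have hopen : ∀ x, IsOpen (c x) := fun x => Metric.isOpen_ball.inter isOpen_Ioi
    have hcover : Set.Icc a b ⊆ ⋃ x, c x := by
      intro z hz
      exact Set.mem_iUnion.2 ⟨⟨z, hz⟩, Metric.mem_ball_self (hp _), hsub hz⟩
    obtain ⟨t, ht⟩ := hs.elim_finite_subcover c hopen hcover
    have hcover' : Set.Icc a b ⊆ ⋃ i : t, c i := by
      intro z hz
      obtain ⟨i, hi, hzi⟩ := Set.mem_iUnion₂.1 (ht hz)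
      exact Set.mem_iUnion.2 ⟨⟨i, hi⟩, hzi⟩
    obtain ⟨δ, hδ, hball⟩ := lebesgue_number_lemma_of_metric hs (fun i : t => hopen i)
      hcover'
    set K₀ : NNReal := t.sup (fun x => (p x).1) with hK₀
    set Kr : ℝ := max (K₀ : ℝ) (2 * C / δ) with hKr
    have hKr0 : 0 ≤ Kr := le_trans K₀.coe_nonneg (le_max_left _ _)
    refine ⟨Real.toNNReal Kr, fun x hx y hy => ?_⟩
    have hKco : ((Real.toNNReal Kr : NNReal) : ℝ) = Kr :=
      Real.coe_toNNReal Kr (le_trans K₀.coe_nonneg (le_max_left _ _))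
    rw [hKco]
    rcases lt_or_ge (dist x y) δ with hd | hd
    · obtain ⟨i, hi⟩ := hball x hx
      have hxc : x ∈ c i := hi (Metric.mem_ball_self hδ)
      have hyc : y ∈ c i := hi (by simpa [Metric.mem_ball, dist_comm] using hd)
      have h1 : dist (u x) (u y) ≤ ((p i).1 : ℝ) * dist x y :=
        (lipschitzOnWith_iff_dist_le_mul.1 (hlip i)) x hxc y hyc
      have h2 : ((p i).1 : ℝ) ≤ Kr := by
        refine le_trans ?_ (le_max_left (K₀ : ℝ) _)
        exact_mod_cast Finset.le_sup (f := fun x => (p x).1) i.2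
      exact h1.trans (mul_le_mul_of_nonneg_right h2 dist_nonneg)
    · have h1 : dist (u x) (u y) ≤ 2 * C := by
        calc dist (u x) (u y) ≤ ‖u x‖ + ‖u y‖ := dist_le_norm_add_norm _ _
        _ ≤ C + C := add_le_add (hC x hx) (hC y hy)
        _ = 2 * C := by ring
      have h2 : 2 * C ≤ (2 * C / δ) * dist x y := by
        rw [div_mul_eq_mul_div, le_div_iff₀ hδ]
        have : 2 * C * δ ≤ 2 * C * dist x y :=
          mul_le_mul_of_nonneg_left hd (by linarith)
        linarith
      calc dist (u x) (u y) ≤ (2 * C / δ) * dist x y := h1.trans h2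
      _ ≤ Kr * dist x y :=
          mul_le_mul_of_nonneg_right (le_max_right _ _) dist_nonneg

theorem stmt_6 (c₀ c₁ : ℝ) (hc₀ : 0 < c₀) (hc₁ : 0 < c₁) (u : ℝ → ℝ)
    (hloclip : ∀ x > (0:ℝ), ∃ K : NNReal, ∃ ε > (0:ℝ),
      LipschitzOnWith K u (Metric.ball x ε ∩ Set.Ioi 0))
    (hgrowth : ∃ ε > (0:ℝ), ∃ xbar : ℝ, ∀ x ≥ xbar, 0 < x → u x / x ≤ c₀ - ε)
    (m M : ℝ) (hm : 0 < m) (hmM : m < M) :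
    ∃ R > (0:ℝ),
      (∀ x ∈ Set.Icc m M,
        sSup {y : ℝ | ∃ i > (0:ℝ), y = u (x + i) - c₀ * i - c₁}
          = sSup {y : ℝ | ∃ i : ℝ, 0 < i ∧ i ≤ R ∧ y = u (x + i) - c₀ * i - c₁}) ∧
      ∃ K : NNReal, LipschitzOnWith K
        (fun x => sSup {y : ℝ | ∃ i > (0:ℝ), y = u (x + i) - c₀ * i - c₁})
        (Set.Icc m M) := by
  obtain ⟨ε, hε, xbar, hgr⟩ := hgrowth
  -- lower bound of u on [m+1, M+1]
  have hcont1 : ContinuousOn u (Set.Icc (m+1) (M+1)) := fun z hz =>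
    (contAt_aux u hloclip z (by linarith [hz.1])).continuousWithinAt
  obtain ⟨C₁, hC₁⟩ := isCompact_Icc.exists_bound_of_continuousOn hcont1
  set R : ℝ := max (max xbar 1) ((c₀ * M + c₀ + C₁) / ε) with hRdef
  have hR1 : (1:ℝ) ≤ R := le_trans (le_max_right xbar 1) (le_max_left _ _)
  have hR0 : (0:ℝ) < R := lt_of_lt_of_le one_pos hR1
  have hRxbar : xbar ≤ R := le_trans (le_max_left xbar 1) (le_max_left _ _)
  have hRdiv : (c₀ * M + c₀ + C₁) / ε ≤ R := le_max_right _ _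
  -- the key comparison for large i
  have keyA : ∀ x ∈ Set.Icc m M, ∀ i : ℝ, R ≤ i →
      u (x + i) - c₀ * i - c₁ ≤ u (x + 1) - c₀ * 1 - c₁ := by
    intro x hx i hi
    have hx0 : 0 < x := lt_of_lt_of_le hm hx.1
    have hi1 : (1:ℝ) ≤ i := hR1.trans hi
    have hxi0 : 0 < x + i := by linarith
    have hxib : x + i ≥ xbar := by linarith [hRxbar.trans hi]
    have hgu : u (x + i) ≤ (c₀ - ε) * (x + i) := by
      have := hgr (x + i) hxib hxi0
      calc u (x + i) = (u (x + i) / (x + i)) * (x + i) := by field_simp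
      _ ≤ (c₀ - ε) * (x + i) := mul_le_mul_of_nonneg_right this hxi0.le
    have hx1mem : x + 1 ∈ Set.Icc (m+1) (M+1) := ⟨by linarith [hx.1], by linarith [hx.2]⟩
    have hL : -C₁ ≤ u (x + 1) := by
      have := hC₁ (x + 1) hx1mem
      have := abs_le.1 (by simpa [Real.norm_eq_abs] using this)
      linarith [this.1]
    have hεi : c₀ * M + c₀ + C₁ ≤ ε * i := by
      have h := hRdiv.trans hi
      rw [div_le_iff₀ hε] at h
      linarith [h]
    have hxM : c₀ * x ≤ c₀ * M := mul_le_mul_of_nonneg_left hx.2 hc₀.le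
    have hεx : 0 < ε * x := mul_pos hε hx0
    nlinarith [hgu, hεi, hxM, hεx, hL]
  -- upper bound of u on [m, M+R]
  have hcont2 : ContinuousOn u (Set.Icc m (M+R)) := fun z hz =>
    (contAt_aux u hloclip z (lt_of_lt_of_le hm hz.1)).continuousWithinAt
  obtain ⟨C₂, hC₂⟩ := isCompact_Icc.exists_bound_of_continuousOn hcont2
  have hC₂' : ∀ z ∈ Set.Icc m (M+R), u z ≤ C₂ := by
    intro z hz
    have := abs_le.1 (by simpa [Real.norm_eq_abs] using hC₂ z hz)
    exact this.2
  set S : ℝ → Set ℝ := fun x => {y : ℝ | ∃ i > (0:ℝ), y = u (x + i) - c₀ * i - c₁}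
    with hSdef
  set T : ℝ → Set ℝ := fun x => {y : ℝ | ∃ i : ℝ, 0 < i ∧ i ≤ R ∧ y = u (x + i) - c₀ * i - c₁}
    with hTdef
  have hST : ∀ x, T x ⊆ S x := by
    rintro x y ⟨i, hi, hiR, rfl⟩
    exact ⟨i, hi, rfl⟩
  have hSbdd : ∀ x ∈ Set.Icc m M, BddAbove (S x) := by
    intro x hx
    refine ⟨C₂, ?_⟩
    rintro y ⟨i, hi, rfl⟩
    rcases le_or_gt i R with hiR | hiR
    · have hmem : x + i ∈ Set.Icc m (M+R) :=
        ⟨by linarith [hx.1], by linarith [hx.2]⟩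
      have := hC₂' (x + i) hmem
      nlinarith
    · have h1 := keyA x hx i hiR.le
      have hmem : x + 1 ∈ Set.Icc m (M+R) := ⟨by linarith [hx.1], by linarith [hx.2]⟩
      have := hC₂' (x + 1) hmem
      nlinarith
  have hTne : ∀ x, (T x).Nonempty := fun x =>
    ⟨u (x + 1) - c₀ * 1 - c₁, 1, one_pos, hR1, rfl⟩
  have hTbdd : ∀ x ∈ Set.Icc m M, BddAbove (T x) := fun x hx =>
    (hSbdd x hx).mono (hST x)
  have heq : ∀ x ∈ Set.Icc m M, sSup (S x) = sSup (T x) := by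
    intro x hx
    refine le_antisymm ?_ (csSup_le_csSup (hSbdd x hx) (hTne x) (hST x))
    refine csSup_le ((hTne x).mono (hST x)) ?_
    rintro y ⟨i, hi, rfl⟩
    rcases le_or_gt i R with hiR | hiR
    · exact le_csSup (hTbdd x hx) ⟨i, hi, hiR, rfl⟩
    · exact (keyA x hx i hiR.le).trans (le_csSup (hTbdd x hx) ⟨1, one_pos, hR1, rfl⟩)
  refine ⟨R, hR0, heq, ?_⟩
  obtain ⟨Kc, hKc⟩ := lip_on_compact_aux u hloclip m (M + R) hm
  refine ⟨Kc, ?_⟩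
  rw [lipschitzOnWith_iff_dist_le_mul]
  intro x hx y hy
  have haux : ∀ x' ∈ Set.Icc m M, ∀ y' ∈ Set.Icc m M,
      sSup (T x') ≤ sSup (T y') + (Kc : ℝ) * |x' - y'| := by
    intro x' hx' y' hy'
    refine csSup_le (hTne x') ?_
    rintro z ⟨i, hi, hiR, rfl⟩
    have hmx : x' + i ∈ Set.Icc m (M+R) := ⟨by linarith [hx'.1], by linarith [hx'.2]⟩
    have hmy : y' + i ∈ Set.Icc m (M+R) := ⟨by linarith [hy'.1], by linarith [hy'.2]⟩
    have hdist : |u (x' + i) - u (y' + i)| ≤ (Kc : ℝ) * |x' - y'| := by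
      have h := hKc (x' + i) hmx (y' + i) hmy
      simp only [Real.dist_eq] at h
      have hdd : x' + i - (y' + i) = x' - y' := by ring
      rwa [hdd] at h
    have h1 : u (x' + i) ≤ u (y' + i) + (Kc : ℝ) * |x' - y'| := by
      have := (abs_le.1 hdist).2
      linarith
    have h2 : u (y' + i) - c₀ * i - c₁ ≤ sSup (T y') :=
      le_csSup (hTbdd y' hy') ⟨i, hi, hiR, rfl⟩
    linarith
  have e1 := heq x hx
  have e2 := heq y hy
  rw [e1, e2, Real.dist_eq, abs_le]
  have d1 := haux x hx y hy
  have d2 := haux y hy x hx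
  rw [abs_sub_comm] at d2
  rw [Real.dist_eq]
  constructor <;> linarith
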